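/- Let A₀ and A₁ be real diagonal n×n matrices with nonnegative diagonal entries, let B₀, B₁ ∈ ℝⁿ, and let k, m ≥ 1 be natural numbers. Let f : ℝⁿ → ℝⁿ be the map obtained by applying x ↦ A₀·x + B₀ exactly k times and then applying x ↦ A₁·x + B₁ exactly m times. Then f is an affine map f(x) = (A₁^m · A₀^k)·x + c for some vector c ∈ ℝⁿ, where A₁^m · A₀^k is a diagonal matrix with nonnegative diagonal entries, and consequently there do not exist distinct vectors v ≠ w with f(v) = w and f(w) = v. -/
import Mathlib


open Matrix

/-- Applying the affine map `x ↦ A₀·x + B₀` exactly `k` times and then the affine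
map `x ↦ A₁·x + B₁` exactly `m` times, where `A₀, A₁` are nonnegative diagonal
real matrices, gives an affine map with linear part `A₁^m · A₀^k`, which is a
nonnegative diagonal matrix; consequently this composite map has no 2-cycle of
distinct points. -/
private lemma isDiag_mul {n : ℕ} {A B : Matrix (Fin n) (Fin n) ℝ}
    (hA : A.IsDiag) (hB : B.IsDiag) : (A * B).IsDiag := by
  intro i j hij
  rw [Matrix.mul_apply]
  apply Finset.sum_eq_zero
  intro l _
  rcases eq_or_ne i l with rfl | h
  · rw [hB hij, mul_zero]
  · rw [hA h, zero_mul]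

private lemma isDiag_pow {n : ℕ} {A : Matrix (Fin n) (Fin n) ℝ}
    (hA : A.IsDiag) (j : ℕ) : (A ^ j).IsDiag := by
  induction j with
  | zero => simpa using Matrix.isDiag_one
  | succ j ih => rw [pow_succ]; exact isDiag_mul ih hA

private lemma mul_diag_entry {n : ℕ} {A : Matrix (Fin n) (Fin n) ℝ}
    (hA : A.IsDiag) (B : Matrix (Fin n) (Fin n) ℝ) (i : Fin n) :
    (A * B) i i = A i i * B i i := by
  rw [Matrix.mul_apply]
  rw [Finset.sum_eq_single i]
  · intro l _ h; rw [hA (Ne.symm h), zero_mul]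
  · intro h; exact absurd (Finset.mem_univ i) h

private lemma pow_diag_entry_nonneg {n : ℕ} {A : Matrix (Fin n) (Fin n) ℝ}
    (hA : A.IsDiag) (hpos : ∀ i, 0 ≤ A i i) (j : ℕ) (i : Fin n) :
    0 ≤ (A ^ j) i i := by
  induction j with
  | zero => simp
  | succ j ih =>
      rw [pow_succ, mul_diag_entry (isDiag_pow hA j)]
      exact mul_nonneg ih (hpos i)

private lemma iterate_affine {n : ℕ} (A : Matrix (Fin n) (Fin n) ℝ)
    (B : Fin n → ℝ) (j : ℕ) :
    ∃ c : Fin n → ℝ, ∀ x, (fun x => A.mulVec x + B)^[j] x = (A ^ j).mulVec x + c := by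
  induction j with
  | zero =>
      exact ⟨0, fun x => by simp [Matrix.one_mulVec]⟩
  | succ j ih =>
      obtain ⟨c, hc⟩ := ih
      refine ⟨A.mulVec c + B, fun x => ?_⟩
      rw [Function.iterate_succ_apply', hc]
      simp only [Matrix.mulVec_add, Matrix.mulVec_mulVec, pow_succ']
      abel

/-- Applying the affine map `x ↦ A₀·x + B₀` exactly `k` times and then the affine
map `x ↦ A₁·x + B₁` exactly `m` times, where `A₀, A₁` are nonnegative diagonal
real matrices, gives an affine map with linear part `A₁^m · A₀^k`, which is a
nonnegative diagonal matrix; consequently this composite map has no 2-cycle of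
distinct points. -/
theorem iterated_nonneg_diagonal_affine_no_two_cycle {n : ℕ}
    (A₀ A₁ : Matrix (Fin n) (Fin n) ℝ)
    (hA₀ : A₀.IsDiag) (hA₁ : A₁.IsDiag)
    (hA₀pos : ∀ i, 0 ≤ A₀ i i) (hA₁pos : ∀ i, 0 ≤ A₁ i i)
    (B₀ B₁ : Fin n → ℝ) (k m : ℕ) (hk : 1 ≤ k) (hm : 1 ≤ m) :
    ∃ c : Fin n → ℝ,
      (∀ x : Fin n → ℝ,
        ((fun x => A₁.mulVec x + B₁)^[m] ∘ (fun x => A₀.mulVec x + B₀)^[k]) x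
          = (A₁ ^ m * A₀ ^ k).mulVec x + c) ∧
      (A₁ ^ m * A₀ ^ k).IsDiag ∧
      (∀ i, 0 ≤ (A₁ ^ m * A₀ ^ k) i i) ∧
      ¬ ∃ v w : Fin n → ℝ, v ≠ w ∧
        ((fun x => A₁.mulVec x + B₁)^[m] ∘ (fun x => A₀.mulVec x + B₀)^[k]) v = w ∧
        ((fun x => A₁.mulVec x + B₁)^[m] ∘ (fun x => A₀.mulVec x + B₀)^[k]) w = v := by
  obtain ⟨c₀, hc₀⟩ := iterate_affine A₀ B₀ k
  obtain ⟨c₁, hc₁⟩ := iterate_affine A₁ B₁ m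
  set M := A₁ ^ m * A₀ ^ k with hM
  have hf : ∀ x, ((fun x => A₁.mulVec x + B₁)^[m] ∘ (fun x => A₀.mulVec x + B₀)^[k]) x
      = M.mulVec x + ((A₁ ^ m).mulVec c₀ + c₁) := by
    intro x
    simp only [Function.comp_apply, hc₀, hc₁, Matrix.mulVec_add, Matrix.mulVec_mulVec, hM]
    abel
  have hMdiag : M.IsDiag := isDiag_mul (isDiag_pow hA₁ m) (isDiag_pow hA₀ k)
  have hMpos : ∀ i, 0 ≤ M i i := by
    intro i
    rw [hM, mul_diag_entry (isDiag_pow hA₁ m)]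
    exact mul_nonneg (pow_diag_entry_nonneg hA₁ hA₁pos m i)
      (pow_diag_entry_nonneg hA₀ hA₀pos k i)
  refine ⟨(A₁ ^ m).mulVec c₀ + c₁, hf, hMdiag, hMpos, ?_⟩
  rintro ⟨v, w, hvw, hv, hw⟩
  rw [hf] at hv hw
  apply hvw
  funext i
  have hdiag : ∀ x : Fin n → ℝ, M.mulVec x i = M i i * x i := by
    intro x
    rw [Matrix.mulVec, dotProduct, Finset.sum_eq_single i]
    · intro l _ h; rw [hMdiag (Ne.symm h), zero_mul]
    · intro h; exact absurd (Finset.mem_univ i) h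
  have h1 : M i i * v i + ((A₁ ^ m).mulVec c₀ + c₁) i = w i := by
    rw [← hdiag]; exact congrFun hv i
  have h2 : M i i * w i + ((A₁ ^ m).mulVec c₀ + c₁) i = v i := by
    rw [← hdiag]; exact congrFun hw i
  have : M i i * (v i - w i) = -(v i - w i) := by linarith [h1, h2]
  nlinarith [hMpos i, sq_nonneg (v i - w i)]
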